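/- Every interval exchange transformation of finite order (as an element of the group of interval exchange transformations of I = [p,q)) can be written as a finite product of interval swap maps. -/

import Mathlib

open scoped TensorProduct

/-- An interval exchange transformation of the half-open interval `[p, q)`:
a bijection of `[p, q)` onto itself, extended by the identity outside,
which is a translation on each piece of a finite partition of `[p, q)`
into half-open intervals. -/
def IsIET (p q : ℝ) (f : ℝ → ℝ) : Prop :=
  Set.BijOn f (Set.Ico p q) (Set.Ico p q) ∧
  (∀ x, x ∉ Set.Ico p q → f x = x) ∧
  ∃ (n : ℕ) (pt : Fin (n + 1) → ℝ),
    StrictMono pt ∧ pt 0 = p ∧ pt (Fin.last n) = q ∧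
    ∀ i : Fin n, ∃ t : ℝ,
      ∀ x ∈ Set.Ico (pt i.castSucc) (pt i.succ), f x = x + t

/-- A restricted rotation of type `(a, b)` on `[p, q)`: it exchanges two
adjacent half-open intervals of lengths `a` (on the left) and `b` (on the
right) by translation, fixing the rest of the line. -/
def IsRestrictedRotation (p q a b : ℝ) (f : ℝ → ℝ) : Prop :=
  0 < a ∧ 0 < b ∧ ∃ x : ℝ, p ≤ x ∧ x + a + b ≤ q ∧
    (∀ y ∈ Set.Ico x (x + a), f y = y + b) ∧
    (∀ y ∈ Set.Ico (x + a) (x + a + b), f y = y - a) ∧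
    (∀ y, y ∉ Set.Ico x (x + a + b) → f y = y)

/-- An interval swap map of type `a` on `[p, q)`: it interchanges two
disjoint half-open intervals of length `a` by translation, fixing the
rest of the line. -/
def IsIntervalSwap (p q a : ℝ) (f : ℝ → ℝ) : Prop :=
  0 < a ∧ ∃ x y : ℝ, p ≤ x ∧ x + a ≤ y ∧ y + a ≤ q ∧
    (∀ z ∈ Set.Ico x (x + a), f z = z + (y - x)) ∧
    (∀ z ∈ Set.Ico y (y + a), f z = z - (y - x)) ∧
    (∀ z, z ∉ Set.Ico x (x + a) ∪ Set.Ico y (y + a) → f z = z)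

/-- `f` is a finite product (composition) of interval swap maps on `[p, q)`. -/
def IsSwapProduct (p q : ℝ) (f : ℝ → ℝ) : Prop :=
  ∃ L : List (ℝ → ℝ), (∀ g ∈ L, ∃ a, IsIntervalSwap p q a g) ∧
    f = L.foldr (· ∘ ·) id

/-- `ξ ∈ ℝ ⊗[ℚ] ℝ` is the SAF sum of `f` computed from some partition of
`[p, q)` into half-open intervals on each of which `f` is a translation. -/
def HasSAF (p q : ℝ) (f : ℝ → ℝ) (ξ : ℝ ⊗[ℚ] ℝ) : Prop :=
  ∃ (n : ℕ) (pt : Fin (n + 1) → ℝ) (t : Fin n → ℝ),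
    StrictMono pt ∧ pt 0 = p ∧ pt (Fin.last n) = q ∧
    (∀ i : Fin n, ∀ x ∈ Set.Ico (pt i.castSucc) (pt i.succ), f x = x + t i) ∧
    ξ = ∑ i : Fin n, (pt i.succ - pt i.castSucc) ⊗ₜ[ℚ] t i

/-- Every interval exchange transformation of finite order is a finite
product of interval swap maps. -/
noncomputable def swapFun (u v a : ℝ) : ℝ → ℝ := fun z =>
  if u ≤ z ∧ z < u + a then z + (v - u)
  else if v ≤ z ∧ z < v + a then z - (v - u) else z

lemma swapFun_left {u v a : ℝ} (z : ℝ) (h1 : u ≤ z) (h2 : z < u + a) :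
    swapFun u v a z = z + (v - u) := by simp [swapFun, h1, h2]

lemma swapFun_right {u v a : ℝ} (hav : u + a ≤ v) (z : ℝ) (h1 : v ≤ z) (h2 : z < v + a) :
    swapFun u v a z = z - (v - u) := by
  have : ¬ (u ≤ z ∧ z < u + a) := by rintro ⟨_, h⟩; linarith
  simp [swapFun, this, h1, h2]

lemma swapFun_off {u v a : ℝ} (z : ℝ) (h : z ∉ Set.Ico u (u + a) ∪ Set.Ico v (v + a)) :
    swapFun u v a z = z := by
  simp only [Set.mem_union, Set.mem_Ico, not_or, not_and_or, not_le, not_lt] at h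
  have h1 : ¬ (u ≤ z ∧ z < u + a) := by
    rcases h.1 with h | h
    · rintro ⟨c, _⟩; linarith
    · rintro ⟨_, c⟩; linarith
  have h2 : ¬ (v ≤ z ∧ z < v + a) := by
    rcases h.2 with h | h
    · rintro ⟨c, _⟩; linarith
    · rintro ⟨_, c⟩; linarith
  simp [swapFun, h1, h2]

lemma swapFun_isSwap {p q u v a : ℝ} (ha : 0 < a) (hpu : p ≤ u) (huv : u + a ≤ v)
    (hvq : v + a ≤ q) : IsIntervalSwap p q a (swapFun u v a) := by
  refine ⟨ha, u, v, hpu, huv, hvq, ?_, ?_, ?_⟩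
  · intro z hz; exact swapFun_left z hz.1 hz.2
  · intro z hz; exact swapFun_right huv z hz.1 hz.2
  · intro z hz; exact swapFun_off z hz

lemma swapFun_invol {u v a : ℝ} (hav : u + a ≤ v) (z : ℝ) :
    swapFun u v a (swapFun u v a z) = z := by
  by_cases h1 : u ≤ z ∧ z < u + a
  · rw [swapFun_left z h1.1 h1.2, swapFun_right hav _ (by linarith) (by linarith)]; ring
  by_cases h2 : v ≤ z ∧ z < v + a
  · rw [swapFun_right hav z h2.1 h2.2, swapFun_left _ (by linarith) (by linarith)]; ring
  · have hz : z ∉ Set.Ico u (u + a) ∪ Set.Ico v (v + a) := by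
      simp only [Set.mem_union, Set.mem_Ico, not_or]; exact ⟨h1, h2⟩
    rw [swapFun_off z hz, swapFun_off z hz]

/-- covering lemma -/
lemma exists_piece {N : ℕ} {pt : Fin (N + 1) → ℝ} (hm : StrictMono pt)
    {x : ℝ} (hx1 : pt 0 ≤ x) (hx2 : x < pt (Fin.last N)) :
    ∃ i : Fin N, pt i.castSucc ≤ x ∧ x < pt i.succ := by
  classical
  have hS : (Finset.univ.filter (fun j : Fin (N+1) => pt j ≤ x)).Nonempty :=
    ⟨0, by simp [hx1]⟩
  set j := (Finset.univ.filter (fun j : Fin (N+1) => pt j ≤ x)).max' hS with hj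
  have hjle : pt j ≤ x := by
    have := (Finset.univ.filter (fun j : Fin (N+1) => pt j ≤ x)).max'_mem hS
    simpa using this
  have hjne : j ≠ Fin.last N := by
    intro h; rw [h] at hjle; linarith
  obtain ⟨i, hi⟩ : ∃ i : Fin N, j = i.castSucc := by
    refine ⟨j.castPred hjne, ?_⟩; simp
  refine ⟨i, by rw [← hi]; exact hjle, ?_⟩
  by_contra hcon
  push_neg at hcon
  have : i.succ ∈ Finset.univ.filter (fun j : Fin (N+1) => pt j ≤ x) := by simp [hcon]
  have hle := Finset.le_max' _ _ this
  rw [← hj, hi] at hle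
  exact absurd (lt_of_le_of_lt hle (Fin.castSucc_lt_succ : i.castSucc < i.succ)) (lt_irrefl _)

section Pieces
variable {N : ℕ} {pt : Fin (N + 1) → ℝ} (hm : StrictMono pt)
include hm

lemma succ_le_cs {k l : Fin N} (hkl : k < l) : pt k.succ ≤ pt l.castSucc :=
  hm.monotone (by rw [Fin.le_def]; simp only [Fin.val_succ, Fin.coe_castSucc]
                  exact Fin.lt_def.mp hkl)

lemma piece_subset {k : Fin N} {x : ℝ}
    (hx : x ∈ Set.Ico (pt k.castSucc) (pt k.succ)) : x ∈ Set.Ico (pt 0) (pt (Fin.last N)) := by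
  constructor
  · exact le_trans (hm.monotone (Fin.zero_le _)) hx.1
  · exact lt_of_lt_of_le hx.2 (hm.monotone (Fin.le_last _))

lemma pieces_disjoint {k l : Fin N} (hkl : k ≠ l) {x : ℝ}
    (hx : x ∈ Set.Ico (pt k.castSucc) (pt k.succ)) :
    x ∉ Set.Ico (pt l.castSucc) (pt l.succ) := by
  intro hx'
  rcases hkl.lt_or_gt with h | h
  · have := succ_le_cs hm h; have := hx.2; have := hx'.1; linarith
  · have := succ_le_cs hm h; have := hx'.2; have := hx.1; linarith

lemma swap_pair_lt {p q : ℝ} (h0 : pt 0 = p) (hl : pt (Fin.last N) = q)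
    {i j : Fin N} (hij : i < j)
    (hlen : pt j.succ - pt j.castSucc = pt i.succ - pt i.castSucc) :
    ∃ s : ℝ → ℝ, (∃ a, IsIntervalSwap p q a s) ∧ (∀ z, s (s z) = z) ∧
      (∀ z ∈ Set.Ico (pt i.castSucc) (pt i.succ), s z = z + (pt j.castSucc - pt i.castSucc)) ∧
      (∀ z ∈ Set.Ico (pt j.castSucc) (pt j.succ), s z = z + (pt i.castSucc - pt j.castSucc)) ∧
      (∀ z, z ∉ Set.Ico (pt i.castSucc) (pt i.succ) ∪ Set.Ico (pt j.castSucc) (pt j.succ)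
        → s z = z) := by
  set u := pt i.castSucc
  set v := pt j.castSucc
  set a := pt i.succ - u with ha
  have hua : u + a = pt i.succ := by ring
  have hva : v + a = pt j.succ := by rw [ha]; linarith
  have hapos : 0 < a := by
    have := hm (Fin.castSucc_lt_succ : i.castSucc < i.succ); simp only [ha]; linarith
  have huv : u + a ≤ v := by rw [hua]; exact succ_le_cs hm hij
  have hvq : v + a ≤ q := by rw [hva, ← hl]; exact hm.monotone (Fin.le_last _)
  have hpu : p ≤ u := by rw [← h0]; exact hm.monotone (Fin.zero_le _)
  refine ⟨swapFun u v a, ⟨a, swapFun_isSwap hapos hpu huv hvq⟩, swapFun_invol huv, ?_, ?_, ?_⟩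
  · intro z hz
    rw [swapFun_left z hz.1 (lt_of_lt_of_eq hz.2 hua.symm)]
  · intro z hz
    rw [swapFun_right huv z hz.1 (lt_of_lt_of_eq hz.2 hva.symm)]; ring
  · intro z hz
    refine swapFun_off z ?_
    rwa [hua, hva]

lemma swap_pair {p q : ℝ} (h0 : pt 0 = p) (hl : pt (Fin.last N) = q)
    {i j : Fin N} (hij : i ≠ j)
    (hlen : pt j.succ - pt j.castSucc = pt i.succ - pt i.castSucc) :
    ∃ s : ℝ → ℝ, (∃ a, IsIntervalSwap p q a s) ∧ (∀ z, s (s z) = z) ∧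
      (∀ z ∈ Set.Ico (pt i.castSucc) (pt i.succ), s z = z + (pt j.castSucc - pt i.castSucc)) ∧
      (∀ z ∈ Set.Ico (pt j.castSucc) (pt j.succ), s z = z + (pt i.castSucc - pt j.castSucc)) ∧
      (∀ z, z ∉ Set.Ico (pt i.castSucc) (pt i.succ) ∪ Set.Ico (pt j.castSucc) (pt j.succ)
        → s z = z) := by
  rcases hij.lt_or_gt with h | h
  · exact swap_pair_lt hm h0 hl h hlen
  · obtain ⟨s, h1, h2, h3, h4, h5⟩ := swap_pair_lt hm h0 hl h hlen.symm
    exact ⟨s, h1, h2, h4, h3, fun z hz => h5 z (by rwa [Set.union_comm])⟩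

end Pieces

lemma lemA (p q : ℝ) : ∀ (k N : ℕ) (pt : Fin (N+1) → ℝ) (π : Fin N → Fin N) (f : ℝ → ℝ),
    (Finset.univ.filter (fun i => π i ≠ i)).card ≤ k →
    StrictMono pt → pt 0 = p → pt (Fin.last N) = q →
    Function.Injective π →
    (∀ i : Fin N, pt (π i).succ - pt (π i).castSucc = pt i.succ - pt i.castSucc) →
    (∀ i : Fin N, ∀ x ∈ Set.Ico (pt i.castSucc) (pt i.succ),
      f x = x + (pt (π i).castSucc - pt i.castSucc)) →
    (∀ x, x ∉ Set.Ico p q → f x = x) →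
    IsSwapProduct p q f := by
  intro k
  induction k with
  | zero =>
    intro N pt π f hcard hm h0 hl hinj hlen htr hout
    have hall : ∀ i : Fin N, π i = i := by
      intro i
      by_contra hne
      have : i ∈ Finset.univ.filter (fun i => π i ≠ i) := by simp [hne]
      have := Finset.card_pos.mpr ⟨i, this⟩
      omega
    refine ⟨[], by simp, ?_⟩
    funext x
    simp only [List.foldr_nil, id_eq]
    by_cases hx : x ∈ Set.Ico p q
    · obtain ⟨i, hi1, hi2⟩ := exists_piece hm (h0 ▸ hx.1) (hl ▸ hx.2)
      rw [htr i x ⟨hi1, hi2⟩, hall i]; ring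
    · exact hout x hx
  | succ k ih =>
    intro N pt π f hcard hm h0 hl hinj hlen htr hout
    by_cases hall : ∀ i : Fin N, π i = i
    · refine ⟨[], by simp, ?_⟩
      funext x
      simp only [List.foldr_nil, id_eq]
      by_cases hx : x ∈ Set.Ico p q
      · obtain ⟨i, hi1, hi2⟩ := exists_piece hm (h0 ▸ hx.1) (hl ▸ hx.2)
        rw [htr i x ⟨hi1, hi2⟩, hall i]; ring
      · exact hout x hx
    push_neg at hall
    obtain ⟨i, hne⟩ := hall
    have hnei : i ≠ π i := fun h => hne h.symm
    obtain ⟨s, hs_swap, hs_inv, hs_i, hs_pi, hs_off⟩ :=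
      swap_pair hm h0 hl hnei (by rw [hlen i])
    set π' : Fin N → Fin N := fun j => Equiv.swap i (π i) (π j) with hπ'
    have hπ'val : ∀ j, π' j = Equiv.swap i (π i) (π j) := fun _ => rfl
    have hπ'inj : Function.Injective π' := (Equiv.swap i (π i)).injective.comp hinj
    -- f maps piece j into piece (π j)
    have hmap : ∀ j : Fin N, ∀ x ∈ Set.Ico (pt j.castSucc) (pt j.succ),
        f x ∈ Set.Ico (pt (π j).castSucc) (pt (π j).succ) := by
      intro j x hx
      rw [htr j x hx]
      constructor
      · have := hx.1; linarith
      · have := hx.2; have := hlen j; linarith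
    -- translation property for g = s ∘ f with π'
    have htr' : ∀ j : Fin N, ∀ x ∈ Set.Ico (pt j.castSucc) (pt j.succ),
        (s ∘ f) x = x + (pt (π' j).castSucc - pt j.castSucc) := by
      intro j x hx
      have hfx := hmap j x hx
      simp only [Function.comp_apply]
      by_cases h1 : π j = π i
      · have hji : j = i := hinj h1
        rw [hπ']
        simp only [h1, Equiv.swap_apply_right]
        rw [h1] at hfx
        rw [hs_pi (f x) hfx, htr j x hx, h1, hji]
        ring
      by_cases h2 : π j = i
      · rw [hπ']
        simp only [h2, Equiv.swap_apply_left]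
        rw [h2] at hfx
        rw [hs_i (f x) hfx, htr j x hx, h2]
        ring
      · have : π' j = π j := by
          rw [hπ']; exact Equiv.swap_apply_of_ne_of_ne h2 h1
        rw [this, hs_off (f x) ?_, htr j x hx]
        intro hmem
        rcases hmem with hmem | hmem
        · exact pieces_disjoint hm h2 hfx hmem
        · exact pieces_disjoint hm h1 hfx hmem
    have hlen' : ∀ j : Fin N, pt (π' j).succ - pt (π' j).castSucc
        = pt j.succ - pt j.castSucc := by
      intro j
      rw [hπ'val j]
      rcases eq_or_ne (π j) i with h | h
      · rw [h, Equiv.swap_apply_left, hlen i, ← h]; exact hlen j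
      rcases eq_or_ne (π j) (π i) with h' | h'
      · rw [h', Equiv.swap_apply_right, ← hlen i, ← h']; exact hlen j
      · rw [Equiv.swap_apply_of_ne_of_ne h h']; exact hlen j
    have hout' : ∀ x, x ∉ Set.Ico p q → (s ∘ f) x = x := by
      intro x hx
      simp only [Function.comp_apply, hout x hx]
      refine hs_off x ?_
      intro hmem
      rcases hmem with hmem | hmem
      · exact hx (by rw [← h0, ← hl]; exact piece_subset hm hmem)
      · exact hx (by rw [← h0, ← hl]; exact piece_subset hm hmem)
    have hcard' : (Finset.univ.filter (fun j => π' j ≠ j)).card ≤ k := by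
      have hsub : Finset.univ.filter (fun j => π' j ≠ j)
          ⊆ (Finset.univ.filter (fun j => π j ≠ j)).erase i := by
        intro j hj
        simp only [Finset.mem_filter, Finset.mem_univ, true_and] at hj
        have hπ'i : π' i = i := by rw [hπ'val i]; exact Equiv.swap_apply_right i (π i)
        have hji : j ≠ i := by
          intro h
          exact hj (by rw [h]; exact hπ'i)
        refine Finset.mem_erase.mpr ⟨hji, ?_⟩
        simp only [Finset.mem_filter, Finset.mem_univ, true_and]
        intro hfix
        apply hj
        rw [hπ'val j, hfix]
        exact Equiv.swap_apply_of_ne_of_ne hji (fun h => hji (hinj (hfix.trans h)))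
      have h1 := Finset.card_le_card hsub
      have hmem : i ∈ Finset.univ.filter (fun j => π j ≠ j) := by simp [hne]
      have h2 := Finset.card_erase_of_mem hmem
      omega
    obtain ⟨L, hL, hLf⟩ := ih N pt π' (s ∘ f) hcard' hm h0 hl hπ'inj hlen' htr' hout'
    refine ⟨s :: L, ?_, ?_⟩
    · intro g hg
      rcases List.mem_cons.mp hg with h | h
      · exact h ▸ hs_swap
      · exact hL g h
    · funext x
      simp only [List.foldr_cons, Function.comp_apply]
      rw [← hLf]
      simp only [Function.comp_apply, hs_inv]

theorem finiteOrder_iet_eq_prod_swaps (p q : ℝ) (hpq : p < q)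
    (f : ℝ → ℝ) (hf : IsIET p q f)
    (hfin : ∃ n : ℕ, 0 < n ∧ f^[n] = id) :
    IsSwapProduct p q f := by
  classical
  obtain ⟨hbij, hout, m, pt0, hm0, h00, h0l, htr0⟩ := hf
  obtain ⟨n, hn, hiter⟩ := hfin
  -- basic iterate facts
  have hfg : ∀ x, f^[n-1] (f x) = x := by
    intro x
    have h1 : f^[(n-1)+1] x = f^[n-1] (f^[1] x) := Function.iterate_add_apply f (n-1) 1 x
    have h2 : (n-1)+1 = n := by omega
    rw [h2] at h1
    simpa [hiter] using h1.symm
  have hiterIco : ∀ (k : ℕ) (x : ℝ), x ∈ Set.Ico p q → f^[k] x ∈ Set.Ico p q := by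
    intro k
    induction k with
    | zero => intro x hx; simpa using hx
    | succ k ihk =>
      intro x hx
      rw [Function.iterate_succ_apply']
      exact hbij.mapsTo (ihk x hx)
  -- the finite invariant set of refined breakpoints
  set B : Finset ℝ :=
    insert p ((Finset.univ : Finset (Fin m)).image (fun i => pt0 i.castSucc)) with hB
  have hBIco : ∀ b ∈ B, b ∈ Set.Ico p q := by
    intro b hb
    rw [hB] at hb
    rcases Finset.mem_insert.mp hb with h | h
    · rw [h]; exact ⟨le_refl p, hpq⟩
    · obtain ⟨i, _, rfl⟩ := Finset.mem_image.mp h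
      constructor
      · rw [← h00]; exact hm0.monotone (Fin.zero_le _)
      · rw [← h0l]
        exact hm0 (by rw [Fin.lt_def]; simpa using i.isLt)
  set D : Finset ℝ := (Finset.range n).biUnion (fun k => B.image (f^[k])) with hD
  have hmemD : ∀ y, y ∈ D ↔ ∃ k < n, ∃ b ∈ B, f^[k] b = y := by
    intro y
    simp [hD, Finset.mem_biUnion, Finset.mem_image, Finset.mem_range]
  have hDIco : ∀ y ∈ D, y ∈ Set.Ico p q := by
    intro y hy
    obtain ⟨k, _, b, hb, rfl⟩ := (hmemD y).mp hy
    exact hiterIco k b (hBIco b hb)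
  have hpD : p ∈ D := (hmemD p).mpr ⟨0, hn, p, by simp [hB], rfl⟩
  have hBD : ∀ b ∈ B, b ∈ D := fun b hb => (hmemD b).mpr ⟨0, hn, b, hb, rfl⟩
  have hfD : ∀ y ∈ D, f y ∈ D := by
    intro y hy
    obtain ⟨k, hk, b, hb, rfl⟩ := (hmemD y).mp hy
    rw [← Function.iterate_succ_apply' f k b]
    rcases lt_or_eq_of_le (Nat.succ_le_of_lt hk) with h | h
    · exact (hmemD _).mpr ⟨k+1, h, b, hb, rfl⟩
    · rw [h, hiter, id_eq]
      exact hBD b hb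
  have hgDm : ∀ y ∈ D, f^[n-1] y ∈ D := by
    intro y hy
    obtain ⟨k, hk, b, hb, rfl⟩ := (hmemD y).mp hy
    rw [← Function.iterate_add_apply f (n-1) k b]
    rcases Nat.eq_zero_or_pos k with h | h
    · subst h
      exact (hmemD _).mpr ⟨n-1, by omega, b, hb, by simp⟩
    · have h2 : (n-1) + k = (k-1) + n := by omega
      rw [h2, Function.iterate_add_apply, hiter, id_eq]
      exact (hmemD _).mpr ⟨k-1, by omega, b, hb, rfl⟩
  -- ordered enumeration of D, with q appended
  set N : ℕ := D.card with hNdef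
  have hN : 0 < N := Finset.card_pos.mpr ⟨p, hpD⟩
  set e : Fin N ≃o {x // x ∈ D} := D.orderIsoOfFin hNdef.symm with he
  set d : Fin (N+1) → ℝ :=
    fun j => if h : (j : ℕ) < N then ((e ⟨(j : ℕ), h⟩ : {x // x ∈ D}) : ℝ) else q with hd
  have hd_cs : ∀ j : Fin N, d j.castSucc = ((e ⟨(j : ℕ), j.isLt⟩ : {x // x ∈ D}) : ℝ) := by
    intro j
    rw [hd]
    simp only [Fin.coe_castSucc]
    rw [dif_pos j.isLt]
  have hd_csD : ∀ j : Fin N, d j.castSucc ∈ D := by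
    intro j; rw [hd_cs j]; exact (e ⟨(j : ℕ), j.isLt⟩).2
  have hd_mono : StrictMono d := by
    intro j1 j2 h12
    have h12' : (j1 : ℕ) < (j2 : ℕ) := Fin.lt_def.mp h12
    by_cases h2 : (j2 : ℕ) < N
    · have h1 : (j1 : ℕ) < N := lt_trans h12' h2
      rw [hd]
      simp only
      rw [dif_pos h1, dif_pos h2]
      exact Subtype.coe_lt_coe.mpr (e.strictMono (by rw [Fin.mk_lt_mk]; exact h12'))
    · have h1 : (j1 : ℕ) < N := by have := j2.isLt; omega
      rw [hd]
      simp only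
      rw [dif_pos h1, dif_neg h2]
      exact (hDIco _ (e ⟨(j1 : ℕ), h1⟩).2).2
  have hd0 : d 0 = p := by
    have h0N : (0 : ℕ) < N := hN
    have hcalc : d 0 = ((e ⟨0, h0N⟩ : {x // x ∈ D}) : ℝ) := by
      rw [hd]; simp only [Fin.val_zero]; exact dif_pos h0N
    rw [hcalc]
    refine le_antisymm ?_ (hDIco _ (e ⟨0, h0N⟩).2).1
    have hle : e ⟨0, h0N⟩ ≤ e (e.symm ⟨p, hpD⟩) :=
      e.monotone (by rw [Fin.le_def]; exact Nat.zero_le _)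
    rw [e.apply_symm_apply] at hle
    exact Subtype.coe_le_coe.mpr hle
  have hdlast : d (Fin.last N) = q := by
    rw [hd]; simp
  have hgap : ∀ (j : Fin N) (y : ℝ), y ∈ D →
      d j.castSucc < y → y < d j.succ → False := by
    intro j y hy h1 h2
    set jy : Fin N := e.symm ⟨y, hy⟩ with hjy
    have hey : ((e jy : {x // x ∈ D}) : ℝ) = y := by rw [hjy, e.apply_symm_apply]
    rw [hd_cs j, ← hey] at h1
    have hlt1 : (⟨(j : ℕ), j.isLt⟩ : Fin N) < jy :=
      e.lt_iff_lt.mp (Subtype.coe_lt_coe.mp h1)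
    have hlt1' : (j : ℕ) < (jy : ℕ) := Fin.lt_def.mp hlt1
    by_cases hs : ((j.succ : Fin (N+1)) : ℕ) < N
    · have hds : d j.succ = ((e ⟨((j.succ : Fin (N+1)) : ℕ), hs⟩ : {x // x ∈ D}) : ℝ) := by
        rw [hd]; simp only; rw [dif_pos hs]
      rw [hds, ← hey] at h2
      have hlt2 : jy < (⟨((j.succ : Fin (N+1)) : ℕ), hs⟩ : Fin N) :=
        e.lt_iff_lt.mp (Subtype.coe_lt_coe.mp h2)
      have hlt2' : (jy : ℕ) < (j : ℕ) + 1 := by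
        have := Fin.lt_def.mp hlt2
        simpa using this
      omega
    · have : ((j.succ : Fin (N+1)) : ℕ) = (j : ℕ) + 1 := by simp
      have := jy.isLt
      omega
  have hpieceIco : ∀ (j : Fin N) (x : ℝ),
      x ∈ Set.Ico (d j.castSucc) (d j.succ) → x ∈ Set.Ico p q := by
    intro j x hx
    have := piece_subset hd_mono hx
    rwa [hd0, hdlast] at this
  -- f is a translation on each refined piece
  have hpiece_tr : ∀ j : Fin N, ∃ t : ℝ,
      ∀ x ∈ Set.Ico (d j.castSucc) (d j.succ), f x = x + t := by
    intro j
    have hcsIco : d j.castSucc ∈ Set.Ico p q := hDIco _ (hd_csD j)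
    obtain ⟨i, hi1, hi2⟩ := exists_piece hm0 (h00 ▸ hcsIco.1) (h0l ▸ hcsIco.2)
    obtain ⟨t, ht⟩ := htr0 i
    have hsub : d j.succ ≤ pt0 i.succ := by
      by_contra hcon
      push_neg at hcon
      have hjq : d j.succ ≤ q := by
        rw [← hdlast]; exact hd_mono.monotone (Fin.le_last _)
      have hlt_q : pt0 i.succ < q := lt_of_lt_of_le hcon hjq
      have hne_last : (i.succ : ℕ) < m := by
        by_contra hc
        push_neg at hc
        have : i.succ = Fin.last m := by
          rw [Fin.ext_iff]
          have := i.succ.isLt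
          simp only [Fin.val_last]
          omega
        rw [this, h0l] at hlt_q
        exact lt_irrefl q hlt_q
      have hmem : pt0 i.succ ∈ B := by
        rw [hB]
        refine Finset.mem_insert_of_mem (Finset.mem_image.mpr ⟨⟨(i.succ : ℕ), hne_last⟩, Finset.mem_univ _, ?_⟩)
        exact congrArg pt0 (by ext; simp)
      exact hgap j (pt0 i.succ) (hBD _ hmem) hi2 hcon
    refine ⟨t, fun x hx => ht x ⟨le_trans hi1 hx.1, lt_of_lt_of_le hx.2 hsub⟩⟩
  -- the permutation of pieces
  have hπex : ∀ j : Fin N, ∃ j' : Fin N, d j'.castSucc = f (d j.castSucc) := by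
    intro j
    have hfd : f (d j.castSucc) ∈ D := hfD _ (hd_csD j)
    refine ⟨e.symm ⟨f (d j.castSucc), hfd⟩, ?_⟩
    rw [hd_cs]
    have : (⟨((e.symm ⟨f (d j.castSucc), hfd⟩ : Fin N) : ℕ),
        (e.symm ⟨f (d j.castSucc), hfd⟩ : Fin N).isLt⟩ : Fin N)
        = e.symm ⟨f (d j.castSucc), hfd⟩ := by rw [Fin.ext_iff]
    rw [this, e.apply_symm_apply]
  choose π hπ using hπex
  have hcs_mem : ∀ j : Fin N, d j.castSucc ∈ Set.Ico (d j.castSucc) (d j.succ) :=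
    fun j => ⟨le_refl _, hd_mono (Fin.castSucc_lt_succ : j.castSucc < j.succ)⟩
  have htrA : ∀ j : Fin N, ∀ x ∈ Set.Ico (d j.castSucc) (d j.succ),
      f x = x + (d (π j).castSucc - d j.castSucc) := by
    intro j x hx
    obtain ⟨t, ht⟩ := hpiece_tr j
    have h1 := ht (d j.castSucc) (hcs_mem j)
    rw [← hπ j] at h1
    have h2 : t = d (π j).castSucc - d j.castSucc := by linarith
    rw [ht x hx, h2]
  have hinjA : Function.Injective π := by
    intro j1 j2 h
    have h1 : f (d j1.castSucc) = f (d j2.castSucc) := by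
      rw [← hπ j1, ← hπ j2, h]
    have h2 := hbij.injOn (hDIco _ (hd_csD j1)) (hDIco _ (hd_csD j2)) h1
    have := hd_mono.injective h2
    exact Fin.castSucc_injective N this
  -- lengths are preserved
  have hleA : ∀ j : Fin N,
      d j.succ - d j.castSucc ≤ d (π j).succ - d (π j).castSucc := by
    intro j
    by_contra hcon
    push_neg at hcon
    set x := d j.castSucc + (d (π j).succ - d (π j).castSucc) with hx
    have hxp : d (π j).castSucc < d (π j).succ := hd_mono (Fin.castSucc_lt_succ : (π j).castSucc < (π j).succ)
    have hxIco : x ∈ Set.Ico (d j.castSucc) (d j.succ) := by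
      constructor
      · rw [hx]; linarith
      · rw [hx]; linarith
    have hfx : f x = d (π j).succ := by
      rw [htrA j x hxIco, hx]; ring
    by_cases hs : (((π j).succ : Fin (N+1)) : ℕ) < N
    · have hdsD : d (π j).succ ∈ D := by
        rw [hd]
        simp only
        rw [dif_pos hs]
        exact (e ⟨_, hs⟩).2
      have hxD : x ∈ D := by
        have := hgDm _ hdsD
        rw [← hfx, hfg x] at this
        exact this
      refine hgap j x hxD ?_ hxIco.2
      rw [hx]; linarith
    · have hdq : d (π j).succ = q := by
        rw [hd]; simp only; rw [dif_neg hs]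
      have hf_in : f x ∈ Set.Ico p q := hbij.mapsTo (hpieceIco j x hxIco)
      rw [hfx, hdq] at hf_in
      exact lt_irrefl q hf_in.2
  have hbijπ : Function.Bijective π := Finite.injective_iff_bijective.mp hinjA
  have hsum : ∑ j : Fin N, (d j.succ - d j.castSucc)
      = ∑ j : Fin N, (d (π j).succ - d (π j).castSucc) :=
    (hbijπ.sum_comp (fun j' => d j'.succ - d j'.castSucc)).symm
  have hlenA : ∀ j : Fin N,
      d (π j).succ - d (π j).castSucc = d j.succ - d j.castSucc := by
    have := (Finset.sum_eq_sum_iff_of_le (fun j _ => hleA j)).mp hsum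
    intro j
    exact (this j (Finset.mem_univ j)).symm
  exact lemA p q _ N d π f le_rfl hd_mono hd0 hdlast hinjA hlenA htrA hout
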